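/- Let x and x′ be involutions of W(B̃_n), and suppose the labelled cycle type (m, k_e, k_o, l) of x satisfies k_o > 0 or l > 0. Then x and x′ are conjugate in W(B̃_n) if and only if x′ has the same labelled cycle type as x. -/

import Mathlib

noncomputable section

open Equiv Finset

/-- Points `±1, …, ±n`, encoded as a sign together with an index. -/
abbrev Pt (n : ℕ) := ℤˣ × Fin n

/-- Negation of a point. -/
def negPt {n : ℕ} (x : Pt n) : Pt n := (-x.1, x.2)

/-- The hyperoctahedral group `H_n` of signed permutations: bijections `σ` of `{±1,…,±n}`
with `σ(-i) = -σ(i)`. -/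
def Hgrp (n : ℕ) : Subgroup (Equiv.Perm (Pt n)) where
  carrier := {σ | ∀ x, σ (negPt x) = negPt (σ x)}
  one_mem' := fun _ => rfl
  mul_mem' := by
    intro σ τ hσ hτ x
    have hσ' : ∀ y, σ (negPt y) = negPt (σ y) := hσ
    have hτ' : ∀ y, τ (negPt y) = negPt (τ y) := hτ
    simp only [Equiv.Perm.mul_apply]
    rw [hτ' x, hσ' (τ x)]
  inv_mem' := by
    intro σ hσ x
    have hσ' : ∀ y, σ (negPt y) = negPt (σ y) := hσ
    apply σ.injective
    have hinv : ∀ y, σ (σ⁻¹ y) = y := fun y => Equiv.apply_symm_apply σ y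
    rw [hinv, hσ', hinv]

lemma Hgrp_apply {n : ℕ} {σ : Equiv.Perm (Pt n)} (hσ : σ ∈ Hgrp n) (δ : ℤˣ) (k : Fin n) :
    σ (δ, k) = (δ * (σ (1, k)).1, (σ (1, k)).2) := by
  have hσ' : ∀ y, σ (negPt y) = negPt (σ y) := hσ
  rcases Int.units_eq_one_or δ with h | h <;> subst h
  · simp
  · have h2 := hσ' (1, k)
    simp only [negPt] at h2
    simpa using h2

/-- The (right) action of a signed permutation on integer vectors:
`(v^σ)_j = ε·v_i` whenever `σ(i) = ε j`. -/
def actV {n : ℕ} (σ : Equiv.Perm (Pt n)) (v : Fin n → ℤ) : Fin n → ℤ :=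
  fun j => ((σ (1, j)).1 : ℤ) * v (σ (1, j)).2

lemma actV_add {n : ℕ} (σ : Equiv.Perm (Pt n)) (a b : Fin n → ℤ) :
    actV σ (a + b) = actV σ a + actV σ b := by
  funext j; simp [actV, mul_add]

lemma actV_zero {n : ℕ} (σ : Equiv.Perm (Pt n)) : actV σ 0 = 0 := by
  funext j; simp [actV]

lemma actV_neg {n : ℕ} (σ : Equiv.Perm (Pt n)) (v : Fin n → ℤ) :
    actV σ (-v) = -actV σ v := by
  funext j; simp [actV]

lemma actV_one {n : ℕ} (v : Fin n → ℤ) : actV 1 v = v := by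
  funext j; simp [actV]

lemma actV_mul {n : ℕ} {σ : Equiv.Perm (Pt n)} (hσ : σ ∈ Hgrp n) (τ : Equiv.Perm (Pt n))
    (v : Fin n → ℤ) : actV (σ * τ) v = actV τ (actV σ v) := by
  funext j
  have h := Hgrp_apply hσ (τ (1, j)).1 (τ (1, j)).2
  rw [Prod.mk.eta] at h
  simp only [actV, Equiv.Perm.mul_apply, h]
  push_cast
  ring

/-- The affine Weyl group of type `C̃ₙ`: pairs `(σ, v)` with `σ` a signed permutation and
`v ∈ ℤⁿ`, with multiplication `(σ,v)(τ,u) = (στ, v^τ + u)`. -/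
@[ext] structure WC (n : ℕ) where
  sigma : Hgrp n
  vec : Fin n → ℤ

namespace WC

variable {n : ℕ}

instance : Mul (WC n) :=
  ⟨fun x y => ⟨x.sigma * y.sigma, actV (y.sigma : Equiv.Perm (Pt n)) x.vec + y.vec⟩⟩

instance : One (WC n) := ⟨⟨1, 0⟩⟩

instance : Inv (WC n) :=
  ⟨fun x => ⟨x.sigma⁻¹, -actV ((x.sigma⁻¹ : Hgrp n) : Equiv.Perm (Pt n)) x.vec⟩⟩

@[simp] lemma mul_sigma (x y : WC n) : (x * y).sigma = x.sigma * y.sigma := rfl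
@[simp] lemma mul_vec (x y : WC n) :
    (x * y).vec = actV (y.sigma : Equiv.Perm (Pt n)) x.vec + y.vec := rfl
@[simp] lemma one_sigma : (1 : WC n).sigma = 1 := rfl
@[simp] lemma one_vec : (1 : WC n).vec = 0 := rfl
@[simp] lemma inv_sigma (x : WC n) : (x⁻¹).sigma = x.sigma⁻¹ := rfl
@[simp] lemma inv_vec (x : WC n) :
    (x⁻¹).vec = -actV ((x.sigma⁻¹ : Hgrp n) : Equiv.Perm (Pt n)) x.vec := rfl

instance : Group (WC n) where
  mul_assoc a b c := by
    refine WC.ext ?_ ?_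
    · exact mul_assoc _ _ _
    · show actV (c.sigma : Equiv.Perm (Pt n))
          (actV (b.sigma : Equiv.Perm (Pt n)) a.vec + b.vec) + c.vec
        = actV (((b.sigma * c.sigma : Hgrp n)) : Equiv.Perm (Pt n)) a.vec
          + (actV (c.sigma : Equiv.Perm (Pt n)) b.vec + c.vec)
      rw [actV_add]
      have hc : (((b.sigma * c.sigma : Hgrp n)) : Equiv.Perm (Pt n))
          = (b.sigma : Equiv.Perm (Pt n)) * (c.sigma : Equiv.Perm (Pt n)) := rfl
      rw [hc, actV_mul b.sigma.2]
      abel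
  one_mul a := by
    refine WC.ext (one_mul _) ?_
    show actV (a.sigma : Equiv.Perm (Pt n)) 0 + a.vec = a.vec
    rw [actV_zero, zero_add]
  mul_one a := by
    refine WC.ext (mul_one _) ?_
    show actV ((1 : Hgrp n) : Equiv.Perm (Pt n)) a.vec + 0 = a.vec
    have h1 : ((1 : Hgrp n) : Equiv.Perm (Pt n)) = 1 := rfl
    rw [h1, actV_one, add_zero]
  inv_mul_cancel a := by
    refine WC.ext (inv_mul_cancel _) ?_
    show actV (a.sigma : Equiv.Perm (Pt n))
        (-actV ((a.sigma⁻¹ : Hgrp n) : Equiv.Perm (Pt n)) a.vec) + a.vec = 0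
    rw [actV_neg, ← actV_mul (a.sigma⁻¹ : Hgrp n).2]
    have h1 : ((a.sigma⁻¹ : Hgrp n) : Equiv.Perm (Pt n)) * (a.sigma : Equiv.Perm (Pt n)) = 1 := by
      rw [← Subgroup.coe_mul, inv_mul_cancel, Subgroup.coe_one]
    rw [h1, actV_one, neg_add_cancel]

end WC

/-- `Σw`: the coordinate sum of the translation part. -/
def sumV {n : ℕ} (x : WC n) : ℤ := ∑ i, x.vec i

/-- `minus(w)`: the number of `i ∈ {1,…,n}` with `σ(i) < 0`. -/
def minusCard {n : ℕ} (x : WC n) : ℕ :=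
  (Finset.univ.filter fun i : Fin n => ((x.sigma : Equiv.Perm (Pt n)) (1, i)).1 = -1).card
lemma permOf_bij {n : ℕ} (σ : Hgrp n) :
    Function.Bijective (fun i : Fin n => ((σ : Equiv.Perm (Pt n)) (1, i)).2) := by
  rw [Fintype.bijective_iff_injective_and_card]
  refine ⟨?_, rfl⟩
  intro i j hij
  simp only at hij
  have hmem : ∀ y, (σ : Equiv.Perm (Pt n)) (negPt y) = negPt ((σ : Equiv.Perm (Pt n)) y) := σ.2
  by_cases h1 : ((σ : Equiv.Perm (Pt n)) (1, i)).1 = ((σ : Equiv.Perm (Pt n)) (1, j)).1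
  · have heq : (σ : Equiv.Perm (Pt n)) (1, i) = (σ : Equiv.Perm (Pt n)) (1, j) :=
      Prod.ext h1 hij
    have h2 := (σ : Equiv.Perm (Pt n)).injective heq
    exact congrArg Prod.snd h2
  · exfalso
    have hfst : ((σ : Equiv.Perm (Pt n)) (1, i)).1 = -((σ : Equiv.Perm (Pt n)) (1, j)).1 := by
      rcases Int.units_eq_one_or ((σ : Equiv.Perm (Pt n)) (1, i)).1 with ha | ha <;>
        rcases Int.units_eq_one_or ((σ : Equiv.Perm (Pt n)) (1, j)).1 with hb | hb <;>
        first
          | exact absurd (ha.trans hb.symm) h1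
          | simp [ha, hb]
    have hne : (σ : Equiv.Perm (Pt n)) (1, i) = negPt ((σ : Equiv.Perm (Pt n)) (1, j)) :=
      Prod.ext hfst hij
    rw [← hmem (1, j)] at hne
    have h3 := (σ : Equiv.Perm (Pt n)).injective hne
    have h4 := congrArg Prod.fst h3
    simp only [negPt] at h4
    exact absurd h4 (by decide)

/-- The underlying (unsigned) permutation of `{1,…,n}` induced by a signed permutation. -/
def permOf {n : ℕ} (σ : Hgrp n) : Equiv.Perm (Fin n) :=
  Equiv.ofBijective _ (permOf_bij σ)

@[simp] lemma permOf_apply {n : ℕ} (σ : Hgrp n) (i : Fin n) :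
    permOf σ i = ((σ : Equiv.Perm (Pt n)) (1, i)).2 := rfl

lemma unitsCast_zmod2 (ε : ℤˣ) : (((ε : ℤ) : ZMod 2)) = 1 := by
  rcases Int.units_eq_one_or ε with h | h <;> subst h <;> decide

lemma sumV_mul {n : ℕ} (x y : WC n) :
    ((sumV (x * y) : ℤ) : ZMod 2) = ((sumV x : ℤ) : ZMod 2) + ((sumV y : ℤ) : ZMod 2) := by
  have key : ∀ (σ : Hgrp n) (v : Fin n → ℤ),
      (∑ i, ((actV (σ : Equiv.Perm (Pt n)) v i : ℤ) : ZMod 2)) = ∑ i, ((v i : ℤ) : ZMod 2) := by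
    intro σ v
    have hterm : ∀ i, ((actV (σ : Equiv.Perm (Pt n)) v i : ℤ) : ZMod 2)
        = ((v (permOf σ i) : ℤ) : ZMod 2) := by
      intro i
      show ((((((σ : Equiv.Perm (Pt n)) (1, i)).1 : ℤ)) * v (((σ : Equiv.Perm (Pt n)) (1, i)).2) : ℤ) : ZMod 2) = _
      push_cast
      rw [unitsCast_zmod2, one_mul]
      rfl
    rw [Finset.sum_congr rfl (fun i _ => hterm i)]
    exact Equiv.sum_comp (permOf σ) (fun i => ((v i : ℤ) : ZMod 2))
  have hvec : (x * y).vec = actV (y.sigma : Equiv.Perm (Pt n)) x.vec + y.vec := rfl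
  unfold sumV
  rw [hvec]
  have hsplit : (∑ i, (actV (y.sigma : Equiv.Perm (Pt n)) x.vec + y.vec) i)
      = (∑ i, actV (y.sigma : Equiv.Perm (Pt n)) x.vec i) + ∑ i, y.vec i := by
    rw [← Finset.sum_add_distrib]; rfl
  rw [hsplit]
  push_cast
  rw [key y.sigma x.vec]

lemma minusCard_one {n : ℕ} : minusCard (1 : WC n) = 0 := by
  unfold minusCard
  rw [Finset.card_eq_zero, Finset.filter_eq_empty_iff]
  intro i _
  show ¬ (((1 : Hgrp n) : Equiv.Perm (Pt n)) (1, i)).1 = -1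
  simp only [OneMemClass.coe_one, Equiv.Perm.one_apply]
  decide

lemma ite_units_mul (u w : ℤˣ) :
    ((if u * w = -1 then (1 : ZMod 2) else 0)) =
      (if u = -1 then (1 : ZMod 2) else 0) + (if w = -1 then (1 : ZMod 2) else 0) := by
  rcases Int.units_eq_one_or u with h | h <;> rcases Int.units_eq_one_or w with h' | h' <;>
    subst h <;> subst h' <;> decide

lemma minusCard_mul {n : ℕ} (x y : WC n) :
    ((minusCard (x * y) : ℕ) : ZMod 2) = (minusCard x : ZMod 2) + (minusCard y : ZMod 2) := by
  have hσ : ∀ i : Fin n, ((x * y).sigma : Equiv.Perm (Pt n)) (1, i)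
      = (x.sigma : Equiv.Perm (Pt n)) ((y.sigma : Equiv.Perm (Pt n)) (1, i)) := fun i => rfl
  unfold minusCard
  rw [Finset.card_filter, Finset.card_filter, Finset.card_filter]
  push_cast
  have step : ∀ i : Fin n,
      ((if (((x * y).sigma : Equiv.Perm (Pt n)) (1, i)).1 = -1 then (1 : ZMod 2) else 0))
      = (if ((y.sigma : Equiv.Perm (Pt n)) (1, i)).1 = -1 then (1 : ZMod 2) else 0)
        + (if ((x.sigma : Equiv.Perm (Pt n)) (1, permOf y.sigma i)).1 = -1
            then (1 : ZMod 2) else 0) := by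
    intro i
    rw [hσ i]
    have h := Hgrp_apply x.sigma.2 ((y.sigma : Equiv.Perm (Pt n)) (1, i)).1
      ((y.sigma : Equiv.Perm (Pt n)) (1, i)).2
    rw [Prod.mk.eta] at h
    rw [h]
    exact ite_units_mul _ _
  calc (∑ i : Fin n, if (((x * y).sigma : Equiv.Perm (Pt n)) (1, i)).1 = -1
          then (1 : ZMod 2) else 0)
      = ∑ i : Fin n, ((if ((y.sigma : Equiv.Perm (Pt n)) (1, i)).1 = -1 then (1 : ZMod 2) else 0)
        + (if ((x.sigma : Equiv.Perm (Pt n)) (1, permOf y.sigma i)).1 = -1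
            then (1 : ZMod 2) else 0)) := Finset.sum_congr rfl (fun i _ => step i)
    _ = (∑ i : Fin n, if ((y.sigma : Equiv.Perm (Pt n)) (1, i)).1 = -1 then (1 : ZMod 2) else 0)
        + ∑ i : Fin n, (if ((x.sigma : Equiv.Perm (Pt n)) (1, permOf y.sigma i)).1 = -1
            then (1 : ZMod 2) else 0) := Finset.sum_add_distrib
    _ = (∑ i : Fin n, if ((x.sigma : Equiv.Perm (Pt n)) (1, i)).1 = -1 then (1 : ZMod 2) else 0)
        + ∑ i : Fin n, (if ((y.sigma : Equiv.Perm (Pt n)) (1, i)).1 = -1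
            then (1 : ZMod 2) else 0) := by
          rw [add_comm]
          congr 1
          exact Equiv.sum_comp (permOf y.sigma)
            (fun k => if ((x.sigma : Equiv.Perm (Pt n)) (1, k)).1 = -1 then (1 : ZMod 2) else 0)
lemma even_int_iff_zmod {a : ℤ} : Even a ↔ ((a : ZMod 2) = 0) := by
  rw [ZMod.intCast_zmod_eq_zero_iff_dvd a 2, Int.even_iff]
  push_cast
  omega

lemma sumV_one {n : ℕ} : sumV (1 : WC n) = 0 := by simp [sumV]

/-- The affine Weyl group of type `B̃ₙ`: the elements `w` of `W(C̃ₙ)` with `Σw` even. -/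
def WB (n : ℕ) : Subgroup (WC n) where
  carrier := {w | Even (sumV w)}
  one_mem' := by
    show Even (sumV (1 : WC n))
    rw [sumV_one]
    exact Even.zero
  mul_mem' := by
    intro a b ha hb
    have ha' : ((sumV a : ℤ) : ZMod 2) = 0 := even_int_iff_zmod.mp ha
    have hb' : ((sumV b : ℤ) : ZMod 2) = 0 := even_int_iff_zmod.mp hb
    refine even_int_iff_zmod.mpr ?_
    rw [sumV_mul, ha', hb', add_zero]
  inv_mem' := by
    intro a ha
    have ha' : ((sumV a : ℤ) : ZMod 2) = 0 := even_int_iff_zmod.mp ha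
    refine even_int_iff_zmod.mpr ?_
    have h1 := sumV_mul a⁻¹ a
    rw [inv_mul_cancel, sumV_one, ha', add_zero] at h1
    simpa using h1.symm

lemma intModEq_two_iff {a b : ℤ} : a ≡ b [ZMOD 2] ↔ ((a : ZMod 2) = (b : ZMod 2)) :=
  (ZMod.intCast_eq_intCast_iff a b 2).symm

/-- The second copy `B̄(B̃ₙ)` of the affine Weyl group of type `B̃ₙ` inside `W(C̃ₙ)`:
elements with `Σw ≡ minus(w) (mod 2)`. -/
def Bbar (n : ℕ) : Subgroup (WC n) where
  carrier := {w | sumV w ≡ (minusCard w : ℤ) [ZMOD 2]}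
  one_mem' := by
    show sumV (1 : WC n) ≡ ((minusCard (1 : WC n) : ℤ)) [ZMOD 2]
    rw [sumV_one, minusCard_one]
    rfl
  mul_mem' := by
    intro a b ha hb
    have ha' := intModEq_two_iff.mp ha
    have hb' := intModEq_two_iff.mp hb
    refine intModEq_two_iff.mpr ?_
    rw [sumV_mul, ha', hb']
    push_cast at ha' hb' ⊢
    rw [minusCard_mul]
  inv_mem' := by
    intro a ha
    have ha' := intModEq_two_iff.mp ha
    refine intModEq_two_iff.mpr ?_
    have h1 := sumV_mul a⁻¹ a
    have h2 := minusCard_mul a⁻¹ a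
    rw [inv_mul_cancel, sumV_one] at h1
    rw [inv_mul_cancel, minusCard_one] at h2
    push_cast at ha' h1 h2 ⊢
    linear_combination h1.symm - h2.symm - ha'

/-- The affine Weyl group of type `D̃ₙ`, as the intersection of the two `B̃ₙ`'s. -/
def WD (n : ℕ) : Subgroup (WC n) := WB n ⊓ Bbar n

instance : DecidablePred (fun k : ℤ => Even k) := fun _ => decidable_of_iff _ Int.even_iff.symm
instance : DecidablePred (fun k : ℤ => Odd k) := fun _ => decidable_of_iff _ Int.odd_iff.symm

/-- The labelled cycle type `(m, k_e, k_o, l)` of an element of `W(C̃ₙ)` (intended for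
involutions): `m` is the number of 2-cycles of `σ`, `k_e` (resp. `k_o`) is the number of
`i` with `σ(i) = -i` whose label `v_i` is even (resp. odd), and `l` is the number of fixed
points of `σ`. -/
def lct {n : ℕ} (x : WC n) : ℕ × ℕ × ℕ × ℕ :=
  ((Finset.univ.filter fun i : Fin n => ((x.sigma : Equiv.Perm (Pt n)) (1, i)).2 ≠ i).card / 2,
   (Finset.univ.filter fun i : Fin n =>
      (x.sigma : Equiv.Perm (Pt n)) (1, i) = (-1, i) ∧ Even (x.vec i)).card,
   (Finset.univ.filter fun i : Fin n =>
      (x.sigma : Equiv.Perm (Pt n)) (1, i) = (-1, i) ∧ Odd (x.vec i)).card,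
   (Finset.univ.filter fun i : Fin n => (x.sigma : Equiv.Perm (Pt n)) (1, i) = (1, i)).card)

/-- `f(x)`: twice the sum of the labels over one chosen entry of each 2-cycle (we choose the
entry with the smaller index), plus the sum of the labels over the negative 1-cycles.  Only
its residue modulo 4 is ever used, and for involutions that residue does not depend on the
choice of entries. -/
def fval {n : ℕ} (x : WC n) : ℤ :=
  2 * (∑ i ∈ Finset.univ.filter
        (fun i : Fin n => i < ((x.sigma : Equiv.Perm (Pt n)) (1, i)).2), x.vec i)
  + ∑ i ∈ Finset.univ.filter
      (fun i : Fin n => (x.sigma : Equiv.Perm (Pt n)) (1, i) = (-1, i)), x.vec i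

/-- The commuting graph on a set `X` of elements of a group: vertices are the elements
of `X`, and distinct vertices are adjacent exactly when they commute.  When `X` is a
conjugacy class of involutions this is the commuting involution graph `C(G,X)`. -/
def commGraph {M : Type*} [Group M] (X : Set M) : SimpleGraph X where
  Adj a b := a ≠ b ∧ (a : M) * (b : M) = (b : M) * (a : M)
  symm := ⟨fun a b h => ⟨h.1.symm, h.2.symm⟩⟩
  loopless := ⟨fun a h => h.1 rfl⟩

/-- The conjugacy class of `x` under conjugation by a subgroup `G`. -/
def ConjugacyClassOf {M : Type*} [Group M] (G : Subgroup M) (x : M) : Set M :=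
  {y | ∃ g ∈ G, g⁻¹ * x * g = y}

/-- `X` is a conjugacy class of involutions of the subgroup `G`. -/
def IsInvolutionConjClass {M : Type*} [Group M] (G : Subgroup M) (X : Set M) : Prop :=
  ∃ x ∈ G, orderOf x = 2 ∧ X = ConjugacyClassOf G x

/-- Sign change at the single coordinate `k`. -/
def negAt {n : ℕ} (k : Fin n) : Equiv.Perm (Pt n) :=
  Function.Involutive.toPerm (fun p => if p.2 = k then (-p.1, p.2) else p) (by
    intro p
    by_cases h : p.2 = k <;> simp [h, Prod.ext_iff])

lemma negAt_mem {n : ℕ} (k : Fin n) : negAt k ∈ Hgrp n := by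
  intro p
  show (if (negPt p).2 = k then (-(negPt p).1, (negPt p).2) else negPt p)
      = negPt (if p.2 = k then (-p.1, p.2) else p)
  by_cases h : p.2 = k <;> simp [negPt, h]

/-- The positive transposition of the coordinates `a` and `b`. -/
def swapPos {n : ℕ} (a b : Fin n) : Equiv.Perm (Pt n) :=
  Equiv.prodCongr (Equiv.refl ℤˣ) (Equiv.swap a b)

lemma swapPos_mem {n : ℕ} (a b : Fin n) : swapPos a b ∈ Hgrp n := fun _ => rfl

/-- The negative transposition of the coordinates `a` and `b` (for `a ≠ b` it sends
`a ↦ -b` and `b ↦ -a`). -/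
def negSwap {n : ℕ} (a b : Fin n) : Equiv.Perm (Pt n) := negAt b * negAt a * swapPos a b

lemma negSwap_mem {n : ℕ} (a b : Fin n) : negSwap a b ∈ Hgrp n :=
  mul_mem (mul_mem (negAt_mem b) (negAt_mem a)) (swapPos_mem a b)

/-- Constructor for elements of `W(C̃ₙ)`. -/
def mkW {n : ℕ} (σ : Equiv.Perm (Pt n)) (h : σ ∈ Hgrp n) (v : Fin n → ℤ) : WC n := ⟨⟨σ, h⟩, v⟩

/-- The simple reflection `r₁ = (σ, 0)` with `σ(1) = -1` (take `k = 0`); more generally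
`(σ, 0)` with `σ(k) = -k`. -/
def rFirstGen (n : ℕ) (k : Fin n) : WC n := mkW (negAt k) (negAt_mem k) 0

/-- The simple reflections `rᵢ = (σ, 0)`, `2 ≤ i ≤ n`, where `σ` exchanges `a` and `b`
positively (take `a, b` adjacent). -/
def swapGen (n : ℕ) (a b : Fin n) : WC n := mkW (swapPos a b) (swapPos_mem a b) 0

/-- The simple reflection `r_{n+1} = (σ, eₙ)` with `σ(n) = -n` (take `k = n-1`). -/
def rLastGen (n : ℕ) (k : Fin n) : WC n := mkW (negAt k) (negAt_mem k) (Pi.single k 1)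

/-- The reflections `s = (σ, e_{n-1} + eₙ)` (take `a = n-2`, `b = n-1`) and
`t = (σ, e₁ + e₂)` (take `a = 0`, `b = 1`), where `σ(a) = -b`, `σ(b) = -a`. -/
def negSwapGen (n : ℕ) (a b : Fin n) : WC n :=
  mkW (negSwap a b) (negSwap_mem a b) (Pi.single a 1 + Pi.single b 1)

/-- The projection `π : W(C̃ₙ) → Hₙ`, `(σ, v) ↦ σ`. -/
def projHom (n : ℕ) : WC n →* Equiv.Perm (Pt n) where
  toFun x := (x.sigma : Equiv.Perm (Pt n))
  map_one' := rfl
  map_mul' _ _ := rfl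

/-- The action of a signed permutation on real vectors. -/
def actR {n : ℕ} (σ : Equiv.Perm (Pt n)) (u : Fin n → ℝ) : Fin n → ℝ :=
  fun j => (((σ (1, j)).1 : ℤ) : ℝ) * u (σ (1, j)).2

/-- The affine action of `w = (σ,v) ∈ W(C̃ₙ)` on `ℝⁿ`: `u ↦ u^σ + v`. -/
def affAct {n : ℕ} (x : WC n) : (Fin n → ℝ) → (Fin n → ℝ) :=
  fun u => actR (x.sigma : Equiv.Perm (Pt n)) u + fun i => ((x.vec i : ℤ) : ℝ)

/-- The affine involution `φ` of `ℝⁿ` with `φ(u)ᵢ = 1/2 - u_{n+1-i}`. -/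
def phiR (n : ℕ) : (Fin n → ℝ) → (Fin n → ℝ) := fun u i => 1 / 2 - u i.rev

/-! ### Auxiliary development for the main theorem -/

section Aux

variable {n : ℕ}

/-- The signed permutation with unsigned part `p` and sign data `s`. -/
def ofData (p : Equiv.Perm (Fin n)) (s : Fin n → ℤˣ) : Equiv.Perm (Pt n) where
  toFun x := (x.1 * s x.2, p x.2)
  invFun x := (x.1 * s (p.symm x.2), p.symm x.2)
  left_inv x := by
    refine Prod.ext ?_ ?_ <;> simp [mul_assoc, Int.units_mul_self]
  right_inv x := by
    refine Prod.ext ?_ ?_ <;> simp [mul_assoc, Int.units_mul_self]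

lemma ofData_mem (p : Equiv.Perm (Fin n)) (s : Fin n → ℤˣ) : ofData p s ∈ Hgrp n := by
  intro x
  refine Prod.ext ?_ ?_ <;> simp [ofData, negPt]

@[simp] lemma ofData_apply (p : Equiv.Perm (Fin n)) (s : Fin n → ℤˣ) (δ : ℤˣ) (j : Fin n) :
    ofData p s (δ, j) = (δ * s j, p j) := rfl

/-- Constructor for elements of `WC n` from data. -/
def W3 (p : Equiv.Perm (Fin n)) (s : Fin n → ℤˣ) (v : Fin n → ℤ) : WC n :=
  mkW (ofData p s) (ofData_mem p s) v

@[simp] lemma W3_sigma (p : Equiv.Perm (Fin n)) (s : Fin n → ℤˣ) (v : Fin n → ℤ) :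
    ((W3 p s v).sigma : Equiv.Perm (Pt n)) = ofData p s := rfl

@[simp] lemma W3_vec (p : Equiv.Perm (Fin n)) (s : Fin n → ℤˣ) (v : Fin n → ℤ) :
    (W3 p s v).vec = v := rfl

lemma W3_congr {p q : Equiv.Perm (Fin n)} {s t : Fin n → ℤˣ} {v u : Fin n → ℤ}
    (hp : ∀ j, p j = q j) (hs : ∀ j, s j = t j) (hv : ∀ j, v j = u j) :
    W3 p s v = W3 q t u := by
  have hp' : p = q := Equiv.ext hp
  have hs' : s = t := funext hs
  have hv' : v = u := funext hv
  subst hp' hs' hv'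
  rfl

lemma W3_inj {p q : Equiv.Perm (Fin n)} {s t : Fin n → ℤˣ} {v u : Fin n → ℤ}
    (h : W3 p s v = W3 q t u) :
    (∀ j, p j = q j) ∧ (∀ j, s j = t j) ∧ (∀ j, v j = u j) := by
  have hσ : ((W3 p s v).sigma : Equiv.Perm (Pt n)) = ((W3 q t u).sigma : Equiv.Perm (Pt n)) := by
    rw [h]
  have hvv : (W3 p s v).vec = (W3 q t u).vec := by rw [h]
  refine ⟨fun j => ?_, fun j => ?_, fun j => ?_⟩
  · have := congrFun (congrArg (fun σ : Equiv.Perm (Pt n) => (σ : Pt n → Pt n)) hσ) (1, j)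
    simpa using congrArg Prod.snd this
  · have := congrFun (congrArg (fun σ : Equiv.Perm (Pt n) => (σ : Pt n → Pt n)) hσ) (1, j)
    have h1 := congrArg Prod.fst this
    simpa using h1
  · exact congrFun hvv j

lemma W3_mul (p q : Equiv.Perm (Fin n)) (s t : Fin n → ℤˣ) (v u : Fin n → ℤ) :
    W3 p s v * W3 q t u
      = W3 (p * q) (fun j => t j * s (q j)) (fun j => (t j : ℤ) * v (q j) + u j) := by
  refine WC.ext ?_ ?_
  · refine Subtype.ext ?_
    refine Equiv.ext fun x => ?_
    obtain ⟨δ, j⟩ := x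
    show (ofData p s) ((ofData q t) (δ, j)) = _
    simp [mul_assoc]
  · show actV (ofData q t) v + u = _
    funext j
    simp [actV]

lemma W3_one : (1 : WC n) = W3 1 1 0 := by
  refine WC.ext ?_ ?_
  · refine Subtype.ext (Equiv.ext fun x => ?_)
    obtain ⟨δ, j⟩ := x
    show (δ, j) = ofData 1 1 (δ, j)
    simp
  · rfl

/-- Every element of `WC n` is of the form `W3 p s v`. -/
lemma eq_W3 (x : WC n) :
    x = W3 (permOf x.sigma) (fun i => ((x.sigma : Equiv.Perm (Pt n)) (1, i)).1) x.vec := by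
  refine WC.ext ?_ rfl
  refine Subtype.ext (Equiv.ext fun z => ?_)
  obtain ⟨δ, j⟩ := z
  rw [Hgrp_apply x.sigma.2 δ j]
  simp [mul_comm]

lemma invol_data {p : Equiv.Perm (Fin n)} {s : Fin n → ℤˣ} {v : Fin n → ℤ}
    (h : W3 p s v * W3 p s v = 1) :
    (∀ j, p (p j) = j) ∧ (∀ j, s (p j) = s j) ∧ (∀ j, (s j : ℤ) * v (p j) + v j = 0) := by
  rw [W3_mul, W3_one] at h
  obtain ⟨h1, h2, h3⟩ := W3_inj h
  refine ⟨fun j => by simpa using h1 j, fun j => ?_, fun j => ?_⟩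
  · have := h2 j
    simp only [Equiv.Perm.one_apply, Pi.one_apply] at this
    calc s (p j) = (s j * s j) * s (p j) := by rw [Int.units_mul_self, one_mul]
    _ = s j * (s j * s (p j)) := by rw [mul_assoc]
    _ = s j := by rw [this, mul_one]
  · have := h3 j
    simpa [mul_comm] using this

/-! Conjugation formulas. -/

lemma conj_pp (Q p : Equiv.Perm (Fin n)) (s : Fin n → ℤˣ) (v : Fin n → ℤ) :
    (W3 Q 1 0)⁻¹ * W3 p s v * W3 Q 1 0
      = W3 (Q⁻¹ * p * Q) (fun j => s (Q j)) (fun j => v (Q j)) := by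
  rw [mul_assoc, inv_mul_eq_iff_eq_mul]
  rw [W3_mul, W3_mul]
  refine W3_congr (fun j => ?_) (fun j => ?_) (fun j => ?_)
  · show (p * Q) j = (Q * (Q⁻¹ * p * Q)) j
    simp [mul_assoc]
  · simp
  · simp

lemma conj_sg (t : Fin n → ℤˣ) (p : Equiv.Perm (Fin n)) (s : Fin n → ℤˣ) (v : Fin n → ℤ) :
    (W3 1 t 0)⁻¹ * W3 p s v * W3 1 t 0
      = W3 p (fun j => t j * s j * t (p j)) (fun j => (t j : ℤ) * v j) := by
  rw [mul_assoc, inv_mul_eq_iff_eq_mul]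
  rw [W3_mul, W3_mul]
  refine W3_congr (fun j => ?_) (fun j => ?_) (fun j => ?_)
  · simp
  · show t j * s ((1 : Equiv.Perm (Fin n)) j) = t j * s j * t (p j) * t (p j)
    simp only [Equiv.Perm.one_apply]
    rw [mul_assoc, Int.units_mul_self, mul_one]
  · show (t j : ℤ) * v ((1:Equiv.Perm (Fin n)) j) + 0 = _
    simp

lemma conj_tr (u : Fin n → ℤ) (p : Equiv.Perm (Fin n)) (s : Fin n → ℤˣ) (v : Fin n → ℤ) :
    (W3 1 1 u)⁻¹ * W3 p s v * W3 1 1 u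
      = W3 p s (fun j => v j + u j - (s j : ℤ) * u (p j)) := by
  rw [mul_assoc, inv_mul_eq_iff_eq_mul]
  rw [W3_mul, W3_mul]
  refine W3_congr (fun j => ?_) (fun j => ?_) (fun j => ?_)
  · simp
  · simp
  · show ((1:ℤˣ) : ℤ) * v ((1:Equiv.Perm (Fin n)) j) + u j
        = (s j : ℤ) * u ((p * (1:Equiv.Perm (Fin n))) j) + (v j + u j - (s j : ℤ) * u (p j))
    simp only [Equiv.Perm.one_apply, Equiv.Perm.mul_apply, Units.val_one, one_mul]
    ring

end Aux


section Aux2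

variable {n : ℕ}

def SetT (p : Equiv.Perm (Fin n)) : Finset (Fin n) := Finset.univ.filter fun i => p i ≠ i
def SetS (p : Equiv.Perm (Fin n)) : Finset (Fin n) := Finset.univ.filter fun i => i < p i
def SetR (p : Equiv.Perm (Fin n)) : Finset (Fin n) := Finset.univ.filter fun i => p i < i
def SetNE (p : Equiv.Perm (Fin n)) (s : Fin n → ℤˣ) (v : Fin n → ℤ) : Finset (Fin n) :=
  Finset.univ.filter fun i => (s i = -1 ∧ p i = i) ∧ Even (v i)
def SetNO (p : Equiv.Perm (Fin n)) (s : Fin n → ℤˣ) (v : Fin n → ℤ) : Finset (Fin n) :=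
  Finset.univ.filter fun i => (s i = -1 ∧ p i = i) ∧ Odd (v i)
def SetF (p : Equiv.Perm (Fin n)) (s : Fin n → ℤˣ) : Finset (Fin n) :=
  Finset.univ.filter fun i => s i = 1 ∧ p i = i

lemma lct_W3 (p : Equiv.Perm (Fin n)) (s : Fin n → ℤˣ) (v : Fin n → ℤ) :
    lct (W3 p s v)
      = ((SetT p).card / 2, (SetNE p s v).card, (SetNO p s v).card, (SetF p s).card) := by
  unfold lct SetT SetNE SetNO SetF
  have hσ : ∀ i : Fin n, (((W3 p s v).sigma : Equiv.Perm (Pt n)) (1, i)) = (s i, p i) := by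
    intro i; show ofData p s (1, i) = _; simp
  simp only [hσ, W3_vec, Prod.mk.injEq, ne_eq]

lemma card_filter_comp (Q : Equiv.Perm (Fin n)) (C : Fin n → Prop) [DecidablePred C] :
    (Finset.univ.filter fun i => C (Q i)).card = (Finset.univ.filter C).card := by
  classical
  rw [Finset.card_filter, Finset.card_filter]
  exact Equiv.sum_comp Q (fun k => if C k then 1 else 0)

lemma conj_perm_apply (Q p : Equiv.Perm (Fin n)) (i : Fin n) :
    (Q⁻¹ * p * Q) i = i ↔ p (Q i) = Q i := by
  simp only [Equiv.Perm.mul_apply]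
  constructor
  · intro h
    have := congrArg Q h
    simpa using this
  · intro h
    rw [h]
    simp

lemma lct_conj_pp (Q : Equiv.Perm (Fin n)) (x : WC n) :
    lct ((W3 Q 1 0)⁻¹ * x * W3 Q 1 0) = lct x := by
  conv_lhs => rw [eq_W3 x]
  conv_rhs => rw [eq_W3 x]
  set p := permOf x.sigma
  set s := fun i => ((x.sigma : Equiv.Perm (Pt n)) (1, i)).1
  rw [conj_pp, lct_W3, lct_W3]
  refine Prod.ext ?_ (Prod.ext ?_ (Prod.ext ?_ ?_))
  · show (SetT (Q⁻¹ * p * Q)).card / 2 = (SetT p).card / 2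
    congr 1
    unfold SetT
    rw [← card_filter_comp Q (fun k => p k ≠ k)]
    congr 1
    apply Finset.filter_congr
    intro i _
    simp only [ne_eq]
    rw [conj_perm_apply]
  · show (SetNE (Q⁻¹ * p * Q) (fun j => s (Q j)) (fun j => x.vec (Q j))).card = _
    unfold SetNE
    rw [← card_filter_comp Q (fun k => (s k = -1 ∧ p k = k) ∧ Even (x.vec k))]
    dsimp only
    congr 1
    apply Finset.filter_congr
    intro i _
    rw [conj_perm_apply]
  · show (SetNO (Q⁻¹ * p * Q) (fun j => s (Q j)) (fun j => x.vec (Q j))).card = _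
    unfold SetNO
    rw [← card_filter_comp Q (fun k => (s k = -1 ∧ p k = k) ∧ Odd (x.vec k))]
    dsimp only
    congr 1
    apply Finset.filter_congr
    intro i _
    rw [conj_perm_apply]
  · show (SetF (Q⁻¹ * p * Q) (fun j => s (Q j))).card = _
    unfold SetF
    rw [← card_filter_comp Q (fun k => s k = 1 ∧ p k = k)]
    dsimp only
    congr 1
    apply Finset.filter_congr
    intro i _
    rw [conj_perm_apply]

lemma units_conj_self (a b : ℤˣ) : a * b * a = b := by
  rw [mul_comm a b, mul_assoc, Int.units_mul_self, mul_one]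

lemma even_units_mul (t : ℤˣ) (a : ℤ) : Even ((t : ℤ) * a) ↔ Even a := by
  rcases Int.units_eq_one_or t with h | h <;> subst h <;> simp [even_neg]

lemma odd_units_mul (t : ℤˣ) (a : ℤ) : Odd ((t : ℤ) * a) ↔ Odd a := by
  rcases Int.units_eq_one_or t with h | h <;> subst h <;> simp [odd_neg]

lemma lct_conj_sg (t : Fin n → ℤˣ) (x : WC n) :
    lct ((W3 1 t 0)⁻¹ * x * W3 1 t 0) = lct x := by
  conv_lhs => rw [eq_W3 x]
  conv_rhs => rw [eq_W3 x]
  set p := permOf x.sigma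
  set s := fun i => ((x.sigma : Equiv.Perm (Pt n)) (1, i)).1
  rw [conj_sg, lct_W3, lct_W3]
  refine Prod.ext rfl (Prod.ext ?_ (Prod.ext ?_ ?_))
  · show (SetNE p (fun j => t j * s j * t (p j)) (fun j => (t j : ℤ) * x.vec j)).card = _
    unfold SetNE
    dsimp only
    congr 1
    apply Finset.filter_congr
    intro i _
    constructor
    · rintro ⟨⟨h1, h2⟩, h3⟩
      rw [h2, units_conj_self] at h1
      exact ⟨⟨h1, h2⟩, (even_units_mul _ _).1 h3⟩
    · rintro ⟨⟨h1, h2⟩, h3⟩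
      rw [h2, h1]
      exact ⟨⟨by rw [units_conj_self], rfl⟩, (even_units_mul _ _).2 h3⟩
  · show (SetNO p (fun j => t j * s j * t (p j)) (fun j => (t j : ℤ) * x.vec j)).card = _
    unfold SetNO
    dsimp only
    congr 1
    apply Finset.filter_congr
    intro i _
    constructor
    · rintro ⟨⟨h1, h2⟩, h3⟩
      rw [h2, units_conj_self] at h1
      exact ⟨⟨h1, h2⟩, (odd_units_mul _ _).1 h3⟩
    · rintro ⟨⟨h1, h2⟩, h3⟩
      rw [h2, h1]
      exact ⟨⟨by rw [units_conj_self], rfl⟩, (odd_units_mul _ _).2 h3⟩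
  · show (SetF p (fun j => t j * s j * t (p j))).card = _
    unfold SetF
    dsimp only
    congr 1
    apply Finset.filter_congr
    intro i _
    constructor
    · rintro ⟨h1, h2⟩
      rw [h2, units_conj_self] at h1
      exact ⟨h1, h2⟩
    · rintro ⟨h1, h2⟩
      rw [h2, h1]
      exact ⟨by rw [units_conj_self], rfl⟩

lemma lct_conj_tr (u : Fin n → ℤ) (x : WC n) :
    lct ((W3 1 1 u)⁻¹ * x * W3 1 1 u) = lct x := by
  conv_lhs => rw [eq_W3 x]
  conv_rhs => rw [eq_W3 x]
  set p := permOf x.sigma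
  set s := fun i => ((x.sigma : Equiv.Perm (Pt n)) (1, i)).1
  rw [conj_tr, lct_W3, lct_W3]
  have key : ∀ i, s i = -1 → p i = i →
      x.vec i + u i - (s i : ℤ) * u (p i) = x.vec i + 2 * u i := by
    intro i h1 h2
    rw [h1, h2]
    simp only [Units.val_neg, Units.val_one]
    ring
  refine Prod.ext rfl (Prod.ext ?_ (Prod.ext ?_ rfl))
  · show (SetNE p s fun j => x.vec j + u j - (s j : ℤ) * u (p j)).card = (SetNE p s x.vec).card
    unfold SetNE
    congr 1
    apply Finset.filter_congr
    intro i _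
    simp only []
    constructor
    · rintro ⟨⟨h1, h2⟩, h3⟩
      rw [key i h1 h2, Int.even_iff] at h3
      exact ⟨⟨h1, h2⟩, by rw [Int.even_iff]; omega⟩
    · rintro ⟨⟨h1, h2⟩, h3⟩
      rw [Int.even_iff] at h3
      exact ⟨⟨h1, h2⟩, by rw [key i h1 h2, Int.even_iff]; omega⟩
  · show (SetNO p s fun j => x.vec j + u j - (s j : ℤ) * u (p j)).card = (SetNO p s x.vec).card
    unfold SetNO
    congr 1
    apply Finset.filter_congr
    intro i _
    simp only []
    constructor
    · rintro ⟨⟨h1, h2⟩, h3⟩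
      rw [key i h1 h2, Int.odd_iff] at h3
      exact ⟨⟨h1, h2⟩, by rw [Int.odd_iff]; omega⟩
    · rintro ⟨⟨h1, h2⟩, h3⟩
      rw [Int.odd_iff] at h3
      exact ⟨⟨h1, h2⟩, by rw [key i h1 h2, Int.odd_iff]; omega⟩

lemma lct_conj (g x : WC n) : lct (g⁻¹ * x * g) = lct x := by
  have hfac : g = W3 (permOf g.sigma) 1 0
      * (W3 1 (fun i => ((g.sigma : Equiv.Perm (Pt n)) (1, i)).1) 0 * W3 1 1 g.vec) := by
    rw [W3_mul, W3_mul]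
    refine (eq_W3 g).trans (W3_congr (fun j => by simp) (fun j => by simp) (fun j => by simp)).symm
  rw [hfac]
  rw [show (W3 (permOf g.sigma) 1 0
      * (W3 1 (fun i => ((g.sigma : Equiv.Perm (Pt n)) (1, i)).1) 0 * W3 1 1 g.vec))⁻¹ * x
      * (W3 (permOf g.sigma) 1 0
      * (W3 1 (fun i => ((g.sigma : Equiv.Perm (Pt n)) (1, i)).1) 0 * W3 1 1 g.vec))
    = (W3 1 1 g.vec)⁻¹
      * ((W3 1 (fun i => ((g.sigma : Equiv.Perm (Pt n)) (1, i)).1) 0)⁻¹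
        * ((W3 (permOf g.sigma) 1 0)⁻¹ * x * W3 (permOf g.sigma) 1 0)
        * W3 1 (fun i => ((g.sigma : Equiv.Perm (Pt n)) (1, i)).1) 0)
      * W3 1 1 g.vec from by group]
  rw [lct_conj_tr, lct_conj_sg, lct_conj_pp]

end Aux2


section Aux3

variable {n : ℕ}

lemma mem_SetS_iff {p : Equiv.Perm (Fin n)} {j : Fin n} : j ∈ SetS p ↔ j < p j := by
  simp [SetS]
lemma mem_SetR_iff {p : Equiv.Perm (Fin n)} {j : Fin n} : j ∈ SetR p ↔ p j < j := by
  simp [SetR]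
lemma mem_SetF_iff {p : Equiv.Perm (Fin n)} {s : Fin n → ℤˣ} {j : Fin n} :
    j ∈ SetF p s ↔ s j = 1 ∧ p j = j := by simp [SetF]
lemma mem_SetNE_iff {p : Equiv.Perm (Fin n)} {s : Fin n → ℤˣ} {v : Fin n → ℤ} {j : Fin n} :
    j ∈ SetNE p s v ↔ (s j = -1 ∧ p j = j) ∧ Even (v j) := by simp [SetNE]
lemma mem_SetNO_iff {p : Equiv.Perm (Fin n)} {s : Fin n → ℤˣ} {v : Fin n → ℤ} {j : Fin n} :
    j ∈ SetNO p s v ↔ (s j = -1 ∧ p j = j) ∧ Odd (v j) := by simp [SetNO]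

lemma notF_of_ne {p : Equiv.Perm (Fin n)} {s : Fin n → ℤˣ} {j : Fin n} (h : p j ≠ j) :
    j ∉ SetF p s := by
  rw [mem_SetF_iff]; tauto
lemma notNE_of_ne {p : Equiv.Perm (Fin n)} {s : Fin n → ℤˣ} {v : Fin n → ℤ} {j : Fin n}
    (h : p j ≠ j) : j ∉ SetNE p s v := by
  rw [mem_SetNE_iff]; tauto
lemma notNO_of_ne {p : Equiv.Perm (Fin n)} {s : Fin n → ℤˣ} {v : Fin n → ℤ} {j : Fin n}
    (h : p j ≠ j) : j ∉ SetNO p s v := by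
  rw [mem_SetNO_iff]; tauto
lemma notF_of_NE {p : Equiv.Perm (Fin n)} {s : Fin n → ℤˣ} {v : Fin n → ℤ} {j : Fin n}
    (h : j ∈ SetNE p s v) : j ∉ SetF p s := by
  rw [mem_SetNE_iff] at h
  rw [mem_SetF_iff]
  rintro ⟨h1, -⟩
  rw [h1] at h
  exact absurd h.1.1 (by decide)
lemma notF_of_NO {p : Equiv.Perm (Fin n)} {s : Fin n → ℤˣ} {v : Fin n → ℤ} {j : Fin n}
    (h : j ∈ SetNO p s v) : j ∉ SetF p s := by
  rw [mem_SetNO_iff] at h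
  rw [mem_SetF_iff]
  rintro ⟨h1, -⟩
  rw [h1] at h
  exact absurd h.1.1 (by decide)
lemma notNE_of_NO {p : Equiv.Perm (Fin n)} {s : Fin n → ℤˣ} {v : Fin n → ℤ} {j : Fin n}
    (h : j ∈ SetNO p s v) : j ∉ SetNE p s v := by
  rw [mem_SetNO_iff] at h
  rw [mem_SetNE_iff]
  rintro ⟨-, h2⟩
  exact (Int.not_odd_iff_even.2 h2) h.2
lemma ne_of_S {p : Equiv.Perm (Fin n)} {j : Fin n} (h : j ∈ SetS p) : p j ≠ j := by
  rw [mem_SetS_iff] at h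
  intro hc; rw [hc] at h; exact lt_irrefl j h
lemma ne_of_R {p : Equiv.Perm (Fin n)} {j : Fin n} (h : j ∈ SetR p) : p j ≠ j := by
  rw [mem_SetR_iff] at h
  intro hc; rw [hc] at h; exact lt_irrefl j h
lemma notS_of_R {p : Equiv.Perm (Fin n)} {j : Fin n} (h : j ∈ SetR p) : j ∉ SetS p := by
  rw [mem_SetR_iff] at h
  rw [mem_SetS_iff]
  exact lt_asymm h

lemma mem_S_of_R {p : Equiv.Perm (Fin n)} (hp : ∀ j, p (p j) = j) {j : Fin n}
    (h : j ∈ SetR p) : p j ∈ SetS p := by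
  rw [mem_SetR_iff] at h
  rw [mem_SetS_iff, hp]
  exact h
lemma mem_R_of_S {p : Equiv.Perm (Fin n)} (hp : ∀ j, p (p j) = j) {j : Fin n}
    (h : j ∈ SetS p) : p j ∈ SetR p := by
  rw [mem_SetS_iff] at h
  rw [mem_SetR_iff, hp]
  exact h

lemma five_cases (p : Equiv.Perm (Fin n)) (s : Fin n → ℤˣ) (v : Fin n → ℤ) (j : Fin n) :
    j ∈ SetF p s ∨ j ∈ SetNE p s v ∨ j ∈ SetNO p s v ∨ j ∈ SetS p ∨ j ∈ SetR p := by
  rw [mem_SetF_iff, mem_SetNE_iff, mem_SetNO_iff, mem_SetS_iff, mem_SetR_iff]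
  rcases lt_trichotomy j (p j) with h | h | h
  · tauto
  · rcases Int.units_eq_one_or (s j) with hs | hs
    · exact Or.inl ⟨hs, h.symm⟩
    · rcases Int.even_or_odd (v j) with hv | hv
      · exact Or.inr (Or.inl ⟨⟨hs, h.symm⟩, hv⟩)
      · exact Or.inr (Or.inr (Or.inl ⟨⟨hs, h.symm⟩, hv⟩))
  · tauto

lemma partition_card (p : Equiv.Perm (Fin n)) (s : Fin n → ℤˣ) (v : Fin n → ℤ) :
    (SetS p).card + (SetR p).card + (SetNE p s v).card + (SetNO p s v).card
      + (SetF p s).card = n := by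
  classical
  have key : ∀ j : Fin n,
      ((if j < p j then 1 else 0) + (if p j < j then 1 else 0)
      + (if (s j = -1 ∧ p j = j) ∧ Even (v j) then 1 else 0)
      + (if (s j = -1 ∧ p j = j) ∧ Odd (v j) then 1 else 0)
      + (if s j = 1 ∧ p j = j then 1 else 0) : ℕ) = 1 := by
    intro j
    rcases lt_trichotomy j (p j) with h | h | h
    · have h1 : ¬ p j < j := lt_asymm h
      have h2 : p j ≠ j := by intro hc; rw [hc] at h; exact lt_irrefl j h
      simp [h, h1, h2]
    · have h1 : ¬ j < p j := by rw [← h]; exact lt_irrefl j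
      have h2 : ¬ p j < j := by rw [← h]; exact lt_irrefl j
      rcases Int.units_eq_one_or (s j) with hs | hs
      · have : s j ≠ -1 := by rw [hs]; decide
        simp [h1, h2, hs, this, h.symm]
      · have : s j ≠ 1 := by rw [hs]; decide
        rcases Int.even_or_odd (v j) with hv | hv
        · simp [h1, h2, hs, this, h.symm, hv, Int.not_odd_iff_even.2 hv]
        · simp [h1, h2, hs, this, h.symm, hv, Int.not_even_iff_odd.2 hv]
    · have h1 : ¬ j < p j := lt_asymm h
      have h2 : p j ≠ j := by intro hc; rw [hc] at h; exact lt_irrefl j h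
      simp [h, h1, h2]
  have hsum := Finset.sum_congr rfl (fun j (_ : j ∈ (Finset.univ : Finset (Fin n))) => key j)
  rw [Finset.sum_add_distrib, Finset.sum_add_distrib, Finset.sum_add_distrib,
    Finset.sum_add_distrib] at hsum
  simp only [Finset.sum_const, Finset.card_univ, Fintype.card_fin, smul_eq_mul, mul_one] at hsum
  unfold SetS SetR SetNE SetNO SetF
  rw [Finset.card_filter, Finset.card_filter, Finset.card_filter, Finset.card_filter,
    Finset.card_filter]
  exact hsum

lemma card_S_eq_R (p : Equiv.Perm (Fin n)) (hp : ∀ j, p (p j) = j) :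
    (SetS p).card = (SetR p).card := by
  apply Finset.card_bij (fun a _ => p a)
  · intro a ha
    exact mem_R_of_S hp ha
  · intro a _ b _ hab
    have := congrArg p hab
    rwa [hp, hp] at this
  · intro b hb
    exact ⟨p b, mem_S_of_R hp hb, hp b⟩

/-- The unsigned permutation matching up the data of two involutions with equal invariants. -/
def buildQ (p p' : Equiv.Perm (Fin n)) (s s' : Fin n → ℤˣ) (v v' : Fin n → ℤ)
    (hp' : ∀ j, p' (p' j) = j)
    (eF : {i // i ∈ SetF p' s'} ≃ {i // i ∈ SetF p s})
    (eNE : {i // i ∈ SetNE p' s' v'} ≃ {i // i ∈ SetNE p s v})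
    (eNO : {i // i ∈ SetNO p' s' v'} ≃ {i // i ∈ SetNO p s v})
    (eS : {i // i ∈ SetS p'} ≃ {i // i ∈ SetS p}) : Fin n → Fin n := fun j =>
  if hj : j ∈ SetF p' s' then (eF ⟨j, hj⟩ : Fin n)
  else if hj : j ∈ SetNE p' s' v' then (eNE ⟨j, hj⟩ : Fin n)
  else if hj : j ∈ SetNO p' s' v' then (eNO ⟨j, hj⟩ : Fin n)
  else if hj : j ∈ SetS p' then (eS ⟨j, hj⟩ : Fin n)
  else if hj : j ∈ SetR p' then p ((eS ⟨p' j, mem_S_of_R hp' hj⟩ : Fin n))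
  else j

section buildQ
variable {p p' : Equiv.Perm (Fin n)} {s s' : Fin n → ℤˣ} {v v' : Fin n → ℤ}
    (hp' : ∀ j, p' (p' j) = j)
    (eF : {i // i ∈ SetF p' s'} ≃ {i // i ∈ SetF p s})
    (eNE : {i // i ∈ SetNE p' s' v'} ≃ {i // i ∈ SetNE p s v})
    (eNO : {i // i ∈ SetNO p' s' v'} ≃ {i // i ∈ SetNO p s v})
    (eS : {i // i ∈ SetS p'} ≃ {i // i ∈ SetS p})

lemma buildQ_F {j : Fin n} (hj : j ∈ SetF p' s') :
    buildQ p p' s s' v v' hp' eF eNE eNO eS j = (eF ⟨j, hj⟩ : Fin n) := by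
  unfold buildQ
  rw [dif_pos hj]

lemma buildQ_NE {j : Fin n} (hj : j ∈ SetNE p' s' v') :
    buildQ p p' s s' v v' hp' eF eNE eNO eS j = (eNE ⟨j, hj⟩ : Fin n) := by
  unfold buildQ
  rw [dif_neg (notF_of_NE hj), dif_pos hj]

lemma buildQ_NO {j : Fin n} (hj : j ∈ SetNO p' s' v') :
    buildQ p p' s s' v v' hp' eF eNE eNO eS j = (eNO ⟨j, hj⟩ : Fin n) := by
  unfold buildQ
  rw [dif_neg (notF_of_NO hj), dif_neg (notNE_of_NO hj), dif_pos hj]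

lemma buildQ_S {j : Fin n} (hj : j ∈ SetS p') :
    buildQ p p' s s' v v' hp' eF eNE eNO eS j = (eS ⟨j, hj⟩ : Fin n) := by
  unfold buildQ
  rw [dif_neg (notF_of_ne (ne_of_S hj)), dif_neg (notNE_of_ne (ne_of_S hj)),
    dif_neg (notNO_of_ne (ne_of_S hj)), dif_pos hj]

lemma buildQ_R {j : Fin n} (hj : j ∈ SetR p') :
    buildQ p p' s s' v v' hp' eF eNE eNO eS j
      = p ((eS ⟨p' j, mem_S_of_R hp' hj⟩ : Fin n)) := by
  unfold buildQ
  rw [dif_neg (notF_of_ne (ne_of_R hj)), dif_neg (notNE_of_ne (ne_of_R hj)),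
    dif_neg (notNO_of_ne (ne_of_R hj)), dif_neg (notS_of_R hj), dif_pos hj]

lemma buildQ_leftInv (hp : ∀ j, p (p j) = j) (j : Fin n) :
    buildQ p' p s' s v' v hp eF.symm eNE.symm eNO.symm eS.symm
      (buildQ p p' s s' v v' hp' eF eNE eNO eS j) = j := by
  rcases five_cases p' s' v' j with hj | hj | hj | hj | hj
  · rw [buildQ_F hp' eF eNE eNO eS hj,
      buildQ_F hp eF.symm eNE.symm eNO.symm eS.symm (eF ⟨j, hj⟩).2]
    simp
  · rw [buildQ_NE hp' eF eNE eNO eS hj,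
      buildQ_NE hp eF.symm eNE.symm eNO.symm eS.symm (eNE ⟨j, hj⟩).2]
    simp
  · rw [buildQ_NO hp' eF eNE eNO eS hj,
      buildQ_NO hp eF.symm eNE.symm eNO.symm eS.symm (eNO ⟨j, hj⟩).2]
    simp
  · rw [buildQ_S hp' eF eNE eNO eS hj,
      buildQ_S hp eF.symm eNE.symm eNO.symm eS.symm (eS ⟨j, hj⟩).2]
    simp
  · rw [buildQ_R hp' eF eNE eNO eS hj]
    set k : Fin n := (eS ⟨p' j, mem_S_of_R hp' hj⟩ : Fin n) with hk
    have hkS : k ∈ SetS p := (eS ⟨p' j, mem_S_of_R hp' hj⟩).2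
    have hpkR : p k ∈ SetR p := mem_R_of_S hp hkS
    rw [buildQ_R hp eF.symm eNE.symm eNO.symm eS.symm hpkR]
    have h1 : (⟨p (p k), mem_S_of_R hp hpkR⟩ : {i // i ∈ SetS p}) = ⟨k, hkS⟩ :=
      Subtype.ext (hp k)
    rw [h1]
    have h2 : eS.symm ⟨k, hkS⟩ = ⟨p' j, mem_S_of_R hp' hj⟩ := by
      have hx : (⟨k, hkS⟩ : {i // i ∈ SetS p}) = eS ⟨p' j, mem_S_of_R hp' hj⟩ := Subtype.ext rfl
      rw [hx, Equiv.symm_apply_apply]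
    rw [h2, hp']

end buildQ
end Aux3


section Aux4

variable {n : ℕ}

lemma units_neg_of_ne {a b : ℤˣ} (h : a ≠ b) : -a = b := by
  rcases Int.units_eq_one_or a with ha | ha <;> rcases Int.units_eq_one_or b with hb | hb <;>
    subst ha <;> subst hb <;> first | rfl | exact absurd rfl h

/-- Existence of a conjugating element in `W(C̃ₙ)` for two involutions with the same
labelled cycle type. -/
lemma conj_exists (p p' : Equiv.Perm (Fin n)) (s s' : Fin n → ℤˣ) (v v' : Fin n → ℤ)
    (hxx : W3 p s v * W3 p s v = 1) (hxx' : W3 p' s' v' * W3 p' s' v' = 1)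
    (hlct : lct (W3 p' s' v') = lct (W3 p s v)) :
    ∃ h : WC n, h⁻¹ * W3 p s v * h = W3 p' s' v' := by
  classical
  obtain ⟨hp, hs, hv⟩ := invol_data hxx
  obtain ⟨hp', hs', hv'⟩ := invol_data hxx'
  rw [lct_W3, lct_W3] at hlct
  simp only [Prod.mk.injEq] at hlct
  obtain ⟨hm, hke, hko, hlF⟩ := hlct
  have hScard : (SetS p').card = (SetS p).card := by
    have e1 := card_S_eq_R p hp
    have e2 := card_S_eq_R p' hp'
    have c1 := partition_card p s v
    have c2 := partition_card p' s' v'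
    omega
  set eF := Finset.equivOfCardEq hlF with heF
  set eNE := Finset.equivOfCardEq hke with heNE
  set eNO := Finset.equivOfCardEq hko with heNO
  set eS := Finset.equivOfCardEq hScard with heS
  set Q : Equiv.Perm (Fin n) :=
    ⟨buildQ p p' s s' v v' hp' eF eNE eNO eS,
     buildQ p' p s' s v' v hp eF.symm eNE.symm eNO.symm eS.symm,
     fun j => buildQ_leftInv hp' eF eNE eNO eS hp j,
     fun j => by
       have := buildQ_leftInv (p := p') (p' := p) (s := s') (s' := s) (v := v') (v' := v)
         hp eF.symm eNE.symm eNO.symm eS.symm hp' j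
       simpa using this⟩ with hQ
  have hQdef : ∀ i, Q i = buildQ p p' s s' v v' hp' eF eNE eNO eS i := fun _ => rfl
  -- membership transfer
  have hQF : ∀ j, j ∈ SetF p' s' → Q j ∈ SetF p s := by
    intro j hj
    rw [hQdef j, buildQ_F hp' eF eNE eNO eS hj]
    exact (eF ⟨j, hj⟩).2
  have hQNE : ∀ j, j ∈ SetNE p' s' v' → Q j ∈ SetNE p s v := by
    intro j hj
    rw [hQdef j, buildQ_NE hp' eF eNE eNO eS hj]
    exact (eNE ⟨j, hj⟩).2
  have hQNO : ∀ j, j ∈ SetNO p' s' v' → Q j ∈ SetNO p s v := by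
    intro j hj
    rw [hQdef j, buildQ_NO hp' eF eNE eNO eS hj]
    exact (eNO ⟨j, hj⟩).2
  -- the commutation property
  have hcomm : ∀ j, p (Q j) = Q (p' j) := by
    intro j
    rcases five_cases p' s' v' j with hj | hj | hj | hj | hj
    · have h1 : p' j = j := (mem_SetF_iff.1 hj).2
      rw [h1]
      exact (mem_SetF_iff.1 (hQF j hj)).2
    · have h1 : p' j = j := (mem_SetNE_iff.1 hj).1.2
      rw [h1]
      exact (mem_SetNE_iff.1 (hQNE j hj)).1.2
    · have h1 : p' j = j := (mem_SetNO_iff.1 hj).1.2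
      rw [h1]
      exact (mem_SetNO_iff.1 (hQNO j hj)).1.2
    · -- j ∈ S'
      have hjR : p' j ∈ SetR p' := mem_R_of_S hp' hj
      rw [hQdef j, buildQ_S hp' eF eNE eNO eS hj,
        hQdef (p' j), buildQ_R hp' eF eNE eNO eS hjR]
      congr 1
      exact congrArg (fun z => (eS z : Fin n)) (Subtype.ext (hp' j).symm)
    · -- j ∈ R'
      have hjS : p' j ∈ SetS p' := mem_S_of_R hp' hj
      rw [hQdef j, buildQ_R hp' eF eNE eNO eS hj,
        hQdef (p' j), buildQ_S hp' eF eNE eNO eS hjS]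
      exact hp _
  have hQpQ : Q⁻¹ * p * Q = p' := by
    refine Equiv.ext fun j => ?_
    show Q⁻¹ (p (Q j)) = p' j
    rw [hcomm j]
    exact Equiv.symm_apply_apply Q (p' j)
  -- step 1 : conjugate by the positive permutation Q
  have step1 : (W3 Q 1 0)⁻¹ * W3 p s v * W3 Q 1 0
      = W3 p' (fun j => s (Q j)) (fun j => v (Q j)) := by
    rw [conj_pp, hQpQ]
  set s₁ : Fin n → ℤˣ := fun j => s (Q j) with hs₁def
  set v₁ : Fin n → ℤ := fun j => v (Q j) with hv₁def
  have hinv1 : W3 p' s₁ v₁ * W3 p' s₁ v₁ = 1 := by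
    rw [← step1]
    have e : ((W3 Q 1 0)⁻¹ * W3 p s v * W3 Q 1 0) * ((W3 Q 1 0)⁻¹ * W3 p s v * W3 Q 1 0)
        = (W3 Q 1 0)⁻¹ * (W3 p s v * W3 p s v) * W3 Q 1 0 := by group
    rw [e, hxx, mul_one, inv_mul_cancel]
  obtain ⟨hp1, hs1, hv1⟩ := invol_data hinv1
  -- step 2 : fix the signs on the 2-cycles
  set t : Fin n → ℤˣ := fun j => if j ∈ SetS p' ∧ s₁ j ≠ s' j then -1 else 1 with ht
  have htS : ∀ j, j ∉ SetS p' → t j = 1 := by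
    intro j hj
    rw [ht]
    exact if_neg (by tauto)
  have hs2 : ∀ j, t j * s₁ j * t (p' j) = s' j := by
    intro j
    rcases five_cases p' s' v' j with hj | hj | hj | hj | hj
    · obtain ⟨h1, h2⟩ := mem_SetF_iff.1 hj
      have h3 : j ∉ SetS p' := fun hc => ne_of_S hc h2
      have h4 : s₁ j = 1 := (mem_SetF_iff.1 (hQF j hj)).1
      rw [h2, htS j h3, h4, h1]
      rfl
    · obtain ⟨⟨h1, h2⟩, -⟩ := mem_SetNE_iff.1 hj
      have h3 : j ∉ SetS p' := fun hc => ne_of_S hc h2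
      have h4 : s₁ j = -1 := (mem_SetNE_iff.1 (hQNE j hj)).1.1
      rw [h2, htS j h3, h4, h1]
      rfl
    · obtain ⟨⟨h1, h2⟩, -⟩ := mem_SetNO_iff.1 hj
      have h3 : j ∉ SetS p' := fun hc => ne_of_S hc h2
      have h4 : s₁ j = -1 := (mem_SetNO_iff.1 (hQNO j hj)).1.1
      rw [h2, htS j h3, h4, h1]
      rfl
    · have hjR : p' j ∈ SetR p' := mem_R_of_S hp' hj
      rw [htS (p' j) (notS_of_R hjR), mul_one]
      by_cases hc : s₁ j = s' j
      · have : t j = 1 := by rw [ht]; exact if_neg (by tauto)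
        rw [this, one_mul, hc]
      · have : t j = -1 := by rw [ht]; exact if_pos ⟨hj, hc⟩
        rw [this]
        rw [neg_one_mul]
        exact units_neg_of_ne hc
    · have hjS : p' j ∈ SetS p' := mem_S_of_R hp' hj
      rw [htS j (notS_of_R hj), one_mul]
      have e1 : s₁ j = s₁ (p' j) := by
        have h0 := hs1 (p' j)
        rwa [hp' j] at h0
      have e2 : s' j = s' (p' j) := by
        have h0 := hs' (p' j)
        rwa [hp' j] at h0
      by_cases hc : s₁ (p' j) = s' (p' j)
      · have : t (p' j) = 1 := by rw [ht]; exact if_neg (by tauto)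
        rw [this, mul_one, e1, hc, ← e2]
      · have : t (p' j) = -1 := by rw [ht]; exact if_pos ⟨hjS, hc⟩
        rw [this, e1, e2]
        rw [mul_neg_one]
        exact units_neg_of_ne hc
  have step2 : (W3 1 t 0)⁻¹ * W3 p' s₁ v₁ * W3 1 t 0
      = W3 p' s' (fun j => (t j : ℤ) * v₁ j) := by
    rw [conj_sg]
    exact W3_congr (fun j => rfl) hs2 (fun j => rfl)
  set v₂ : Fin n → ℤ := fun j => (t j : ℤ) * v₁ j with hv₂def
  have hinv2 : W3 p' s' v₂ * W3 p' s' v₂ = 1 := by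
    rw [← step2, ← step1]
    have e : ∀ a b g : WC n, (b⁻¹ * (g⁻¹ * a * g) * b) * (b⁻¹ * (g⁻¹ * a * g) * b)
        = (g * b)⁻¹ * (a * a) * (g * b) := by intro a b g; group
    rw [e, hxx, mul_one, inv_mul_cancel]
  obtain ⟨-, -, hv2⟩ := invol_data hinv2
  -- step 3 : fix the labels by a translation
  set u : Fin n → ℤ := fun j =>
    if j ∈ SetS p' then v' j - v₂ j
    else if p' j = j ∧ s' j = -1 then (v' j - v₂ j) / 2 else 0 with hu
  have hv3 : ∀ j, v₂ j + u j - (s' j : ℤ) * u (p' j) = v' j := by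
    intro j
    rcases five_cases p' s' v' j with hj | hj | hj | hj | hj
    · obtain ⟨h1, h2⟩ := mem_SetF_iff.1 hj
      have h3 : j ∉ SetS p' := fun hc => ne_of_S hc h2
      have h4 : u j = 0 := by
        simp only [hu]
        rw [if_neg h3, if_neg (by rw [h1]; rintro ⟨-, hc⟩; exact absurd hc (by decide))]
      have h5 : v₂ j = 0 := by
        have := hv2 j
        rw [h2, h1] at this
        simp only [Units.val_one, one_mul] at this
        omega
      have h6 : v' j = 0 := by
        have := hv' j
        rw [h2, h1] at this
        simp only [Units.val_one, one_mul] at this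
        omega
      rw [h2, h4, h5, h6, h1]
      simp
    · obtain ⟨⟨h1, h2⟩, hev⟩ := mem_SetNE_iff.1 hj
      have h3 : j ∉ SetS p' := fun hc => ne_of_S hc h2
      have h4 : u j = (v' j - v₂ j) / 2 := by
        simp only [hu]
        rw [if_neg h3, if_pos ⟨h2, h1⟩]
      have hev2 : Even (v₂ j) := by
        rw [hv₂def]
        rw [even_units_mul]
        have := (mem_SetNE_iff.1 (hQNE j hj)).2
        exact this
      obtain ⟨c, hc⟩ := hev
      obtain ⟨d, hd⟩ := hev2
      rw [h2, h4, h1]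
      simp only [Units.val_neg, Units.val_one]
      omega
    · obtain ⟨⟨h1, h2⟩, hod⟩ := mem_SetNO_iff.1 hj
      have h3 : j ∉ SetS p' := fun hc => ne_of_S hc h2
      have h4 : u j = (v' j - v₂ j) / 2 := by
        simp only [hu]
        rw [if_neg h3, if_pos ⟨h2, h1⟩]
      have hod2 : Odd (v₂ j) := by
        rw [hv₂def]
        rw [odd_units_mul]
        exact (mem_SetNO_iff.1 (hQNO j hj)).2
      obtain ⟨c, hc⟩ := hod
      obtain ⟨d, hd⟩ := hod2
      rw [h2, h4, h1]
      simp only [Units.val_neg, Units.val_one]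
      omega
    · have hjR : p' j ∈ SetR p' := mem_R_of_S hp' hj
      have h4 : u j = v' j - v₂ j := by rw [hu]; exact if_pos hj
      have h5 : u (p' j) = 0 := by
        simp only [hu]
        rw [if_neg (notS_of_R hjR), if_neg (by rintro ⟨hc, -⟩; exact ne_of_R hjR hc)]
      rw [h4, h5]
      ring
    · have hjS : p' j ∈ SetS p' := mem_S_of_R hp' hj
      have h4 : u j = 0 := by
        simp only [hu]
        rw [if_neg (notS_of_R hj), if_neg (by rintro ⟨hc, -⟩; exact ne_of_R hj hc)]
      have h5 : u (p' j) = v' (p' j) - v₂ (p' j) := by rw [hu]; exact if_pos hjS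
      have e1 : (s' j : ℤ) * v' (p' j) + v' j = 0 := hv' j
      have e2 : (s' j : ℤ) * v₂ (p' j) + v₂ j = 0 := hv2 j
      rw [h4, h5]
      linear_combination e2 - e1
  have step3 : (W3 1 1 u)⁻¹ * W3 p' s' v₂ * W3 1 1 u = W3 p' s' v' := by
    rw [conj_tr]
    exact W3_congr (fun j => rfl) (fun j => rfl) hv3
  refine ⟨W3 Q 1 0 * (W3 1 t 0 * W3 1 1 u), ?_⟩
  have e : (W3 Q 1 0 * (W3 1 t 0 * W3 1 1 u))⁻¹ * W3 p s v * (W3 Q 1 0 * (W3 1 t 0 * W3 1 1 u))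
      = (W3 1 1 u)⁻¹ * ((W3 1 t 0)⁻¹ * ((W3 Q 1 0)⁻¹ * W3 p s v * W3 Q 1 0) * W3 1 t 0)
        * W3 1 1 u := by group
  rw [e, step1, step2, step3]

end Aux4


theorem WB_conjugacy_lct (n : ℕ) (x x' : WC n) (hx : x ∈ WB n) (hx' : x' ∈ WB n)
    (h2 : orderOf x = 2) (h2' : orderOf x' = 2)
    (m ke ko l : ℕ) (hl : lct x = (m, ke, ko, l)) (hko : 0 < ko ∨ 0 < l) :
    (∃ g ∈ WB n, g⁻¹ * x * g = x') ↔ lct x' = lct x := by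
  constructor
  · rintro ⟨g, -, rfl⟩
    exact lct_conj g x
  · intro hlcteq
    have hxx : x * x = 1 := by
      have h := pow_orderOf_eq_one x
      rwa [h2, pow_two] at h
    have hxx' : x' * x' = 1 := by
      have h := pow_orderOf_eq_one x'
      rwa [h2', pow_two] at h
    set px := permOf x.sigma with hpxd
    set sx : Fin n → ℤˣ := fun i => ((x.sigma : Equiv.Perm (Pt n)) (1, i)).1 with hsxd
    set px' := permOf x'.sigma with hpxd'
    set sx' : Fin n → ℤˣ := fun i => ((x'.sigma : Equiv.Perm (Pt n)) (1, i)).1 with hsxd'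
    have hX : x = W3 px sx x.vec := eq_W3 x
    have hX' : x' = W3 px' sx' x'.vec := eq_W3 x'
    set vx := x.vec
    set vx' := x'.vec
    have hxxW : W3 px sx vx * W3 px sx vx = 1 := by rw [← hX]; exact hxx
    have hxxW' : W3 px' sx' vx' * W3 px' sx' vx' = 1 := by rw [← hX']; exact hxx'
    have hlctW : lct (W3 px' sx' vx') = lct (W3 px sx vx) := by rw [← hX, ← hX']; exact hlcteq
    obtain ⟨h, hconj⟩ := conj_exists px px' sx sx' vx vx' hxxW hxxW' hlctW
    obtain ⟨hp', hs', hv'⟩ := invol_data hxxW'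
    have hlct' : lct (W3 px' sx' vx') = (m, ke, ko, l) := by rw [hlctW, ← hX]; exact hl
    rw [lct_W3] at hlct'
    simp only [Prod.mk.injEq] at hlct'
    obtain ⟨-, -, hko', hl'⟩ := hlct'
    have hW : ∃ w : WC n, w⁻¹ * W3 px' sx' vx' * w = W3 px' sx' vx' ∧ ¬ Even (sumV w) := by
      classical
      rcases hko with hko | hlpos
      · have hne : (SetNO px' sx' vx').Nonempty := Finset.card_pos.1 (by rw [hko']; exact hko)
        obtain ⟨j, hj⟩ := hne
        obtain ⟨⟨hs1, hp1⟩, hodd⟩ := mem_SetNO_iff.1 hj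
        set tj : Fin n → ℤˣ := fun i => if i = j then -1 else 1 with htj
        set uj : Fin n → ℤ := Pi.single j (vx' j) with huj
        have hujne : ∀ i, i ≠ j → uj i = 0 := by
          intro i hi
          rw [huj]
          exact Pi.single_eq_of_ne hi _
        have hpne : ∀ i, i ≠ j → px' i ≠ j := by
          intro i hi hc
          exact hi (by rw [← hp' i, hc, hp1])
        refine ⟨W3 1 tj 0 * W3 1 1 uj, ?_, ?_⟩
        · have e : (W3 1 tj 0 * W3 1 1 uj)⁻¹ * W3 px' sx' vx' * (W3 1 tj 0 * W3 1 1 uj)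
              = (W3 1 1 uj)⁻¹ * ((W3 1 tj 0)⁻¹ * W3 px' sx' vx' * W3 1 tj 0) * W3 1 1 uj := by
            group
          rw [e, conj_sg, conj_tr]
          have hsgn : ∀ i, tj i * sx' i * tj (px' i) = sx' i := by
            intro i
            by_cases hc : i = j
            · subst hc
              rw [hp1]
              exact units_conj_self _ _
            · have e1 : tj i = 1 := by rw [htj]; exact if_neg hc
              have e2 : tj (px' i) = 1 := by rw [htj]; exact if_neg (hpne i hc)
              rw [e1, e2, one_mul, mul_one]
          refine W3_congr (fun i => rfl) hsgn (fun i => ?_)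
          by_cases hc : i = j
          · subst hc
            have e1 : tj i = -1 := by rw [htj]; exact if_pos rfl
            have e2 : uj i = vx' i := by rw [huj]; exact Pi.single_eq_same _ _
            rw [hsgn i, hp1, e1, e2, hs1]
            simp only [Units.val_neg, Units.val_one]
            ring
          · have e1 : tj i = 1 := by rw [htj]; exact if_neg hc
            rw [hsgn i, e1, hujne i hc, hujne (px' i) (hpne i hc)]
            simp
        · rw [W3_mul]
          have hval : sumV (W3 (1 * 1) (fun i => (1 : Fin n → ℤˣ) i * tj ((1 : Equiv.Perm (Fin n)) i))
              (fun i => (((1 : Fin n → ℤˣ) i : ℤˣ) : ℤ) * (0 : Fin n → ℤ) ((1 : Equiv.Perm (Fin n)) i) + uj i))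
              = vx' j := by
            show (∑ i, ((((1 : Fin n → ℤˣ) i : ℤˣ) : ℤ) * (0 : Fin n → ℤ) ((1 : Equiv.Perm (Fin n)) i) + uj i)) = vx' j
            rw [huj]
            simp [Finset.sum_pi_single']
          rw [hval]
          exact Int.not_even_iff_odd.2 hodd
      · have hne : (SetF px' sx').Nonempty := Finset.card_pos.1 (by rw [hl']; exact hlpos)
        obtain ⟨j, hj⟩ := hne
        obtain ⟨hs1, hp1⟩ := mem_SetF_iff.1 hj
        have hpne : ∀ i, i ≠ j → px' i ≠ j := by
          intro i hi hc
          exact hi (by rw [← hp' i, hc, hp1])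
        refine ⟨W3 1 1 (Pi.single j 1), ?_, ?_⟩
        · rw [conj_tr]
          refine W3_congr (fun i => rfl) (fun i => rfl) (fun i => ?_)
          by_cases hc : i = j
          · subst hc
            rw [hp1, hs1, Pi.single_eq_same]
            simp
          · rw [Pi.single_eq_of_ne hc, Pi.single_eq_of_ne (hpne i hc)]
            simp
        · have hval : sumV (W3 1 1 (Pi.single j (1:ℤ))) = 1 := by
            show (∑ i, Pi.single j (1:ℤ) i) = 1
            simp [Finset.sum_pi_single']
          rw [hval]
          decide
    obtain ⟨w, hwconj, hwodd⟩ := hW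
    have zmodone : ∀ a : ZMod 2, a ≠ 0 → a = 1 := by decide
    by_cases hEv : Even (sumV h)
    · refine ⟨h, hEv, ?_⟩
      rw [hX, hX']
      exact hconj
    · refine ⟨h * w, ?_, ?_⟩
      · show Even (sumV (h * w))
        refine even_int_iff_zmod.2 ?_
        rw [sumV_mul]
        have h1 : ((sumV h : ℤ) : ZMod 2) = 1 :=
          zmodone _ (fun hc => hEv (even_int_iff_zmod.2 hc))
        have hh2 : ((sumV w : ℤ) : ZMod 2) = 1 :=
          zmodone _ (fun hc => hwodd (even_int_iff_zmod.2 hc))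
        rw [h1, hh2]
        decide
      · rw [hX, hX']
        have e : (h * w)⁻¹ * W3 px sx vx * (h * w)
            = w⁻¹ * (h⁻¹ * W3 px sx vx * h) * w := by group
        rw [e, hconj, hwconj]
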